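/- For each m < n, the Lipschitz free space over the diamond graph D_n contains a C-complemented subspace C-isomorphic to ℓ₁^k, where C = 2^{n−m} and k = 2(1 + Σ_{i=0}^{n−1} 4^i) − 2·4^{m−1}. -/

import Mathlib

open Finset

/-- The Lipschitz-free (Kantorovich–Rubinstein) norm of a molecule on a finite
metric space, expressed via duality with `1`-Lipschitz functions. -/
noncomputable def freeNorm (M : Type*) [MetricSpace M] [Fintype M] (m : M → ℝ) : ℝ :=
  sSup {r : ℝ | ∃ f : M → ℝ, LipschitzWith 1 f ∧ r = ∑ p, m p * f p}

/-- Molecules: the underlying vector space of the Lipschitz free space on a finite space;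
equipped with `freeNorm` it is the Lipschitz free space `F(M)`. -/
def molecules (M : Type*) [Fintype M] : Submodule ℝ (M → ℝ) where
  carrier := {m | ∑ p, m p = 0}
  add_mem' := by
    intro a b ha hb
    simp only [Set.mem_setOf_eq, Pi.add_apply, Finset.sum_add_distrib] at *
    rw [ha, hb]; ring
  zero_mem' := by simp
  smul_mem' := by
    intro c a ha
    simp only [Set.mem_setOf_eq, Pi.smul_apply, smul_eq_mul, ← Finset.mul_sum] at *
    rw [ha]; ring

/-- The norm of `ℓ₁^k`. -/
def l1norm {k : ℕ} (x : Fin k → ℝ) : ℝ := ∑ i, |x i|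

/-- Edge set of the `n`-th binary diamond graph: each edge spawns 4 edges. -/
def DE : ℕ → Type
  | 0 => Unit
  | n + 1 => DE n × Fin 4

/-- Vertex set of the `n`-th binary diamond graph: two new vertices per old edge. -/
def DV : ℕ → Type
  | 0 => Fin 2
  | n + 1 => DV n ⊕ DE n × Fin 2

def deDecEq : ∀ n, DecidableEq (DE n)
  | 0 => inferInstanceAs (DecidableEq Unit)
  | n + 1 => letI := deDecEq n; inferInstanceAs (DecidableEq (DE n × Fin 4))

instance (n : ℕ) : DecidableEq (DE n) := deDecEq n

def deFintype : ∀ n, Fintype (DE n)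
  | 0 => inferInstanceAs (Fintype Unit)
  | n + 1 => letI := deFintype n; inferInstanceAs (Fintype (DE n × Fin 4))

instance (n : ℕ) : Fintype (DE n) := deFintype n

def dvDecEq : ∀ n, DecidableEq (DV n)
  | 0 => inferInstanceAs (DecidableEq (Fin 2))
  | n + 1 => letI := dvDecEq n; letI := deDecEq n
              inferInstanceAs (DecidableEq (DV n ⊕ DE n × Fin 2))

instance (n : ℕ) : DecidableEq (DV n) := dvDecEq n

def dvFintype : ∀ n, Fintype (DV n)
  | 0 => inferInstanceAs (Fintype (Fin 2))
  | n + 1 => letI := dvFintype n; letI := deFintype n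
              inferInstanceAs (Fintype (DV n ⊕ DE n × Fin 2))

instance (n : ℕ) : Fintype (DV n) := dvFintype n

/-- Endpoints of the edges of the diamond graph `D_n`; each edge `e = (u,v)`
(`u` the endpoint nearer the top) of `D_{n-1}` is replaced by the quadrilateral
`u, a, v, b` with edges `u a`, `a v`, `b v`, `u b`, each oriented downwards
(first coordinate nearer the top). `D_0` is a single edge `(0,1)` (`0` the top). -/
def ends : ∀ n, DE n → DV n × DV n
  | 0, _ => ((0 : Fin 2), (1 : Fin 2))
  | n + 1, (e, i) =>
      let u : DV (n + 1) := Sum.inl (ends n e).1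
      let v : DV (n + 1) := Sum.inl (ends n e).2
      let a : DV (n + 1) := Sum.inr (e, (0 : Fin 2))
      let b : DV (n + 1) := Sum.inr (e, (1 : Fin 2))
      if i.val = 0 then (u, a)
      else if i.val = 1 then (a, v)
      else if i.val = 2 then (b, v)
      else (u, b)

/-- The `n`-th binary diamond graph `D_n` (as an undirected simple graph). -/
def DG (n : ℕ) : SimpleGraph (DV n) where
  Adj x y := x ≠ y ∧ ∃ e : DE n, ends n e = (x, y) ∨ ends n e = (y, x)
  symm := by
    constructor
    intro x y h
    obtain ⟨hxy, e, he⟩ := h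
    exact ⟨hxy.symm, e, he.symm⟩
  loopless := by
    constructor
    intro x h
    exact h.1 rfl

/-- The cycle space `Z(D_n)` of the diamond graph: the space of circulations, i.e. the
kernel of the boundary operator. Over `ℝ` this is exactly the linear span of the signed
indicator functions of the cycles of `D_n` (w.r.t. the orientation given by `ends`). -/
def cycleSpace (n : ℕ) : Submodule ℝ (DE n → ℝ) where
  carrier := {f | ∀ v : DV n,
    ∑ e : DE n, f e * ((if (ends n e).2 = v then (1 : ℝ) else 0) -
      (if (ends n e).1 = v then (1 : ℝ) else 0)) = 0}
  add_mem' := by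
    intro a b ha hb
    intro v
    simp only [Pi.add_apply, add_mul]
    rw [Finset.sum_add_distrib, ha v, hb v]
    ring
  zero_mem' := by
    intro v
    simp
  smul_mem' := by
    intro c a ha
    intro v
    simp only [Pi.smul_apply, smul_eq_mul, mul_assoc]
    rw [← Finset.mul_sum, ha v, mul_zero]

/-- The `ℓ₁(E(D_n))` norm on the edge space. -/
def e1norm {n : ℕ} (f : DE n → ℝ) : ℝ := ∑ e, |f e|


-- ends computation lemmas
lemma ends_mk0 (j : ℕ) (e : DE j) :
    ends (j+1) (e, (0:Fin 4)) = (Sum.inl (ends j e).1, Sum.inr (e, (0:Fin 2))) := rfl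
lemma ends_mk1 (j : ℕ) (e : DE j) :
    ends (j+1) (e, (1:Fin 4)) = (Sum.inr (e, (0:Fin 2)), Sum.inl (ends j e).2) := rfl
lemma ends_mk2 (j : ℕ) (e : DE j) :
    ends (j+1) (e, (2:Fin 4)) = (Sum.inr (e, (1:Fin 2)), Sum.inl (ends j e).2) := rfl
lemma ends_mk3 (j : ℕ) (e : DE j) :
    ends (j+1) (e, (3:Fin 4)) = (Sum.inl (ends j e).1, Sum.inr (e, (1:Fin 2))) := rfl

lemma ends_ne : ∀ (n : ℕ) (e : DE n), (ends n e).1 ≠ (ends n e).2 := by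
  intro n
  induction n with
  | zero => intro e; show (0:Fin 2) ≠ 1; decide
  | succ j ih =>
    rintro ⟨e, i⟩
    fin_cases i
    · exact (by rw [ends_mk0]; exact Sum.inl_ne_inr :
        (ends (j+1) (e, (0:Fin 4))).1 ≠ (ends (j+1) (e, (0:Fin 4))).2)
    · exact (by rw [ends_mk1]; exact Sum.inr_ne_inl :
        (ends (j+1) (e, (1:Fin 4))).1 ≠ (ends (j+1) (e, (1:Fin 4))).2)
    · exact (by rw [ends_mk2]; exact Sum.inr_ne_inl :
        (ends (j+1) (e, (2:Fin 4))).1 ≠ (ends (j+1) (e, (2:Fin 4))).2)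
    · exact (by rw [ends_mk3]; exact Sum.inl_ne_inr :
        (ends (j+1) (e, (3:Fin 4))).1 ≠ (ends (j+1) (e, (3:Fin 4))).2)

def pickE : ∀ (j : ℕ), DV j → DE j
  | 0, _ => ()
  | j+1, Sum.inl w => (pickE j w, if w = (ends j (pickE j w)).1 then (0:Fin 4) else (1:Fin 4))
  | _+1, Sum.inr (e, i) => (e, if i = (0:Fin 2) then (0:Fin 4) else (2:Fin 4))

lemma pickE_spec : ∀ (j : ℕ) (v : DV j),
    v = (ends j (pickE j v)).1 ∨ v = (ends j (pickE j v)).2 := by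
  intro j
  induction j with
  | zero =>
    intro v
    match v with
    | (0 : Fin 2) => left; rfl
    | (1 : Fin 2) => right; rfl
  | succ j ih =>
    intro v
    match v with
    | Sum.inl w =>
      rcases ih w with h | h
      · left; show Sum.inl w = _
        rw [pickE, if_pos h, ends_mk0]; exact congrArg _ h
      · have hne : ¬ (w = (ends j (pickE j w)).1) := by
          intro hc; exact (ends_ne j (pickE j w)) (hc.symm.trans h)
        right; show Sum.inl w = _
        rw [pickE, if_neg hne, ends_mk1]; exact congrArg _ h
    | Sum.inr (e, i) =>
      match i with
      | (0 : Fin 2) =>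
        right; show Sum.inr (e, 0) = _
        rw [pickE, if_pos rfl, ends_mk0]
      | (1 : Fin 2) =>
        left; show Sum.inr (e, 1) = _
        rw [pickE, if_neg (by decide), ends_mk2]

/-- Index type for the basis of the subspace: old vertices (levels `≤ M`) plus
vertices of levels `M+2 .. M+1+t`. -/
def KK (M : ℕ) : ℕ → Type
  | 0 => DV M
  | t+1 => KK M t ⊕ (DE (M+1+t) × Fin 2)

def kkFintype (M : ℕ) : ∀ t, Fintype (KK M t)
  | 0 => inferInstanceAs (Fintype (DV M))
  | t+1 => letI := kkFintype M t; inferInstanceAs (Fintype (KK M t ⊕ (DE (M+1+t) × Fin 2)))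

instance (M t : ℕ) : Fintype (KK M t) := kkFintype M t

def kkDecEq (M : ℕ) : ∀ t, DecidableEq (KK M t)
  | 0 => inferInstanceAs (DecidableEq (DV M))
  | t+1 => letI := kkDecEq M t; inferInstanceAs (DecidableEq (KK M t ⊕ (DE (M+1+t) × Fin 2)))

instance (M t : ℕ) : DecidableEq (KK M t) := kkDecEq M t

/-- The basis molecules. -/
noncomputable def BB (M : ℕ) : ∀ t, KK M t → DV (M+1+t) → ℝ
  | 0, w => fun v =>
      (@ite ℝ (v = Sum.inl w) (instDecidableEqDV _ v _) 1 0) - (@ite ℝ (v = Sum.inr (pickE M w, (0:Fin 2))) (instDecidableEqDV _ v _) 1 0)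
  | t+1, Sum.inl y => Sum.elim (BB M t y) 0
  | t+1, Sum.inr x => fun v =>
      2*(@ite ℝ (v = Sum.inr x) (instDecidableEqDV _ v _) 1 0)
      - (@ite ℝ (v = Sum.inl (ends (M+1+t) x.1).1) (instDecidableEqDV _ v _) 1 0)
      - (@ite ℝ (v = Sum.inl (ends (M+1+t) x.1).2) (instDecidableEqDV _ v _) 1 0)

/-- Weights. -/
noncomputable def ww (M : ℕ) : ∀ t, KK M t → ℝ
  | 0, _ => 1
  | t+1, Sum.inl y => ww M t y
  | t+1, Sum.inr _ => (1/2 : ℝ)^t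

/-- The realization map: builds a Lipschitz function with prescribed pairings. -/
noncomputable def FF (M : ℕ) : ∀ t, (KK M t → ℝ) → DV (M+1+t) → ℝ
  | 0, c => Sum.elim c 0
  | t+1, c => Sum.elim (FF M t (c ∘ Sum.inl))
      (fun x => (FF M t (c ∘ Sum.inl) (ends (M+1+t) x.1).1
                  + FF M t (c ∘ Sum.inl) (ends (M+1+t) x.1).2)/2
                + c (Sum.inr x) * (1/2:ℝ)^(t+1))

lemma ww_pos (M : ℕ) : ∀ t (y : KK M t), 0 < ww M t y := by
  intro t
  induction t with
  | zero => intro y; show (0:ℝ) < 1; norm_num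
  | succ t ih =>
    rintro (y | x)
    · exact ih y
    · show (0:ℝ) < (1/2)^t; positivity

lemma sum_BB (M : ℕ) : ∀ t (y : KK M t), ∑ v, BB M t y v = 0 := by
  intro t
  induction t with
  | zero =>
    intro y
    simp only [BB, Finset.sum_sub_distrib]
    erw [Finset.sum_ite_eq' Finset.univ, Finset.sum_ite_eq' Finset.univ]
    erw [if_pos (Finset.mem_univ _), if_pos (Finset.mem_univ _)]
    simp
  | succ t ih =>
    rintro (y | x)
    · show ∑ v : DV (M+1+t) ⊕ (DE (M+1+t) × Fin 2), Sum.elim (BB M t y) 0 v = 0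
      rw [Fintype.sum_sum_type]
      simpa using ih y
    · show ∑ v : DV (M+1+t) ⊕ (DE (M+1+t) × Fin 2), _ = (0:ℝ)
      simp only [BB, Finset.sum_sub_distrib, ← Finset.mul_sum]
      erw [Finset.sum_ite_eq' Finset.univ, Finset.sum_ite_eq' Finset.univ,
        Finset.sum_ite_eq' Finset.univ]
      norm_num

lemma pair_BB0 (M : ℕ) (w : DV M) (f : DV (M+1) → ℝ) :
    ∑ v, BB M 0 w v * f v = f (Sum.inl w) - f (Sum.inr (pickE M w, (0:Fin 2))) := by
  simp only [BB, sub_mul, Finset.sum_sub_distrib, ite_mul, one_mul, zero_mul]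
  erw [Finset.sum_ite_eq' Finset.univ, Finset.sum_ite_eq' Finset.univ]
  erw [if_pos (Finset.mem_univ _), if_pos (Finset.mem_univ _)]
  rfl

lemma pair_BB_inl (M t : ℕ) (y : KK M t) (f : DV (M+1+(t+1)) → ℝ) :
    ∑ v, BB M (t+1) (Sum.inl y) v * f v = ∑ v, BB M t y v * f (Sum.inl v) := by
  show ∑ v : DV (M+1+t) ⊕ (DE (M+1+t) × Fin 2), Sum.elim (BB M t y) 0 v * f v = _
  rw [Fintype.sum_sum_type]
  simp

lemma pair_BB_inr (M t : ℕ) (x : DE (M+1+t) × Fin 2) (f : DV (M+1+(t+1)) → ℝ) :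
    ∑ v, BB M (t+1) (Sum.inr x) v * f v
      = 2*f (Sum.inr x) - f (Sum.inl (ends (M+1+t) x.1).1)
        - f (Sum.inl (ends (M+1+t) x.1).2) := by
  simp only [BB, sub_mul, Finset.sum_sub_distrib, ite_mul, one_mul, zero_mul, mul_assoc,
    ← Finset.mul_sum]
  erw [Finset.sum_ite_eq' Finset.univ, Finset.sum_ite_eq' Finset.univ,
    Finset.sum_ite_eq' Finset.univ]
  erw [if_pos (Finset.mem_univ _), if_pos (Finset.mem_univ _), if_pos (Finset.mem_univ _)]

lemma FF_inl (M t : ℕ) (c : KK M (t+1) → ℝ) (a : DV (M+1+t)) :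
    FF M (t+1) c (Sum.inl a) = FF M t (c ∘ Sum.inl) a := rfl

lemma FF_inr (M t : ℕ) (c : KK M (t+1) → ℝ) (x : DE (M+1+t) × Fin 2) :
    FF M (t+1) c (Sum.inr x)
      = (FF M t (c ∘ Sum.inl) (ends (M+1+t) x.1).1
          + FF M t (c ∘ Sum.inl) (ends (M+1+t) x.1).2)/2
        + c (Sum.inr x) * (1/2:ℝ)^(t+1) := rfl

lemma pair_BB_FF (M : ℕ) : ∀ t (y : KK M t) (c : KK M t → ℝ),
    ∑ v, BB M t y v * FF M t c v = c y * ww M t y := by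
  intro t
  induction t with
  | zero =>
    intro y c
    rw [pair_BB0 M y (FF M 0 c)]
    show c y - 0 = c y * 1
    ring
  | succ t ih =>
    rintro (y | x) c
    · rw [pair_BB_inl]
      show ∑ v, BB M t y v * FF M t (c ∘ Sum.inl) v = _
      rw [ih y (c ∘ Sum.inl)]
      rfl
    · rw [pair_BB_inr, FF_inr, FF_inl, FF_inl]
      show _ = c (Sum.inr x) * (1/2:ℝ)^t
      ring

lemma FF_add (M : ℕ) : ∀ t (c d : KK M t → ℝ) (v : DV (M+1+t)),
    FF M t (fun y => c y + d y) v = FF M t c v + FF M t d v := by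
  intro t
  induction t with
  | zero =>
    intro c d v
    rcases v with a | b
    · rfl
    · show (0:ℝ) = 0 + 0; ring
  | succ t ih =>
    intro c d v
    rcases v with a | x
    · exact ih _ _ a
    · show _ + _ = _
      rw [FF_inr, FF_inr]
      show (FF M t (fun y => c (Sum.inl y) + d (Sum.inl y)) _
          + FF M t (fun y => c (Sum.inl y) + d (Sum.inl y)) _)/2 + _ = _
      rw [ih (fun y => c (Sum.inl y)) (fun y => d (Sum.inl y)),
        ih (fun y => c (Sum.inl y)) (fun y => d (Sum.inl y))]
      rw [show (fun y => c (Sum.inl y)) = c ∘ Sum.inl from rfl]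
      rw [show (fun y => d (Sum.inl y)) = d ∘ Sum.inl from rfl]
      ring

lemma FF_smul (M : ℕ) : ∀ t (r : ℝ) (c : KK M t → ℝ) (v : DV (M+1+t)),
    FF M t (fun y => r * c y) v = r * FF M t c v := by
  intro t
  induction t with
  | zero =>
    intro r c v
    rcases v with a | b
    · rfl
    · show (0:ℝ) = r * 0; ring
  | succ t ih =>
    intro r c v
    rcases v with a | x
    · exact ih r _ a
    · rw [FF_inr, FF_inr]
      show (FF M t (fun y => r * c (Sum.inl y)) _
          + FF M t (fun y => r * c (Sum.inl y)) _)/2 + _ = _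
      rw [ih r (fun y => c (Sum.inl y)), ih r (fun y => c (Sum.inl y))]
      rw [show (fun y => c (Sum.inl y)) = c ∘ Sum.inl from rfl]
      ring

lemma gap_FF (M : ℕ) : ∀ t (c : KK M t → ℝ), (∀ y, |c y| ≤ 1) →
    ∀ e : DE (M+1+t),
      |FF M t c (ends (M+1+t) e).1 - FF M t c (ends (M+1+t) e).2|
        ≤ (1+(t:ℝ))*(1/2:ℝ)^t := by
  intro t
  induction t with
  | zero =>
    intro c hc e
    rw [Nat.cast_zero]
    rcases e with ⟨e, i⟩
    have h0 : |FF M 0 c (ends (M+1) (e, (0:Fin 4))).1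
        - FF M 0 c (ends (M+1) (e, (0:Fin 4))).2| ≤ (1+(0:ℝ))*(1/2:ℝ)^0 := by
      rw [ends_mk0]
      show |c (ends M e).1 - 0| ≤ _
      simpa using hc (ends M e).1
    have h1 : |FF M 0 c (ends (M+1) (e, (1:Fin 4))).1
        - FF M 0 c (ends (M+1) (e, (1:Fin 4))).2| ≤ (1+(0:ℝ))*(1/2:ℝ)^0 := by
      rw [ends_mk1]
      show |0 - c (ends M e).2| ≤ _
      simpa using hc (ends M e).2
    have h2 : |FF M 0 c (ends (M+1) (e, (2:Fin 4))).1
        - FF M 0 c (ends (M+1) (e, (2:Fin 4))).2| ≤ (1+(0:ℝ))*(1/2:ℝ)^0 := by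
      rw [ends_mk2]
      show |0 - c (ends M e).2| ≤ _
      simpa using hc (ends M e).2
    have h3 : |FF M 0 c (ends (M+1) (e, (3:Fin 4))).1
        - FF M 0 c (ends (M+1) (e, (3:Fin 4))).2| ≤ (1+(0:ℝ))*(1/2:ℝ)^0 := by
      rw [ends_mk3]
      show |c (ends M e).1 - 0| ≤ _
      simpa using hc (ends M e).1
    fin_cases i
    · exact h0
    · exact h1
    · exact h2
    · exact h3
  | succ t ih =>
    intro c hc e
    rcases e with ⟨e, i⟩
    have ihe := ih (fun y => c (Sum.inl y)) (fun y => hc (Sum.inl y)) e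
    have key : ∀ (s : ℝ), |s| ≤ 1 →
        |(FF M t (fun y => c (Sum.inl y)) (ends (M+1+t) e).1
          - FF M t (fun y => c (Sum.inl y)) (ends (M+1+t) e).2)/2 + s * (1/2:ℝ)^(t+1)|
          ≤ (1+((t:ℝ)+1))*(1/2:ℝ)^(t+1) := by
      intro s hs
      have h1 := abs_add_le ((FF M t (fun y => c (Sum.inl y)) (ends (M+1+t) e).1
          - FF M t (fun y => c (Sum.inl y)) (ends (M+1+t) e).2)/2) (s * (1/2:ℝ)^(t+1))
      have h2 : |(FF M t (fun y => c (Sum.inl y)) (ends (M+1+t) e).1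
          - FF M t (fun y => c (Sum.inl y)) (ends (M+1+t) e).2)/2|
            ≤ ((1+(t:ℝ))*(1/2:ℝ)^t)/2 := by
        rw [abs_div]
        have := ihe
        rw [abs_of_pos (by norm_num : (0:ℝ) < 2)]
        linarith
      have h3 : |s * (1/2:ℝ)^(t+1)| ≤ (1/2:ℝ)^(t+1) := by
        rw [abs_mul, abs_of_pos (by positivity : (0:ℝ) < (1/2:ℝ)^(t+1))]
        nlinarith [pow_pos (by norm_num : (0:ℝ) < 1/2) (t+1)]
      have : ((1+(t:ℝ))*(1/2:ℝ)^t)/2 + (1/2:ℝ)^(t+1) = (1+((t:ℝ)+1))*(1/2:ℝ)^(t+1) := by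
        rw [pow_succ]
        ring
      linarith
    have hcast : (M+1+(t+1)) = (M+1+t)+1 := rfl
    have g0 : |FF M (t+1) c (ends ((M+1+t)+1) (e, (0:Fin 4))).1
        - FF M (t+1) c (ends ((M+1+t)+1) (e, (0:Fin 4))).2| ≤ (1+((t:ℝ)+1))*(1/2:ℝ)^(t+1) := by
      rw [ends_mk0, FF_inl, FF_inr]
      have heq : FF M t (c ∘ Sum.inl) (ends (M+1+t) e).1
          - ((FF M t (c ∘ Sum.inl) (ends (M+1+t) e).1
              + FF M t (c ∘ Sum.inl) (ends (M+1+t) e).2)/2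
            + c (Sum.inr (e, (0:Fin 2))) * (1/2:ℝ)^(t+1))
          = (FF M t (fun y => c (Sum.inl y)) (ends (M+1+t) e).1
              - FF M t (fun y => c (Sum.inl y)) (ends (M+1+t) e).2)/2
            + (- c (Sum.inr (e, (0:Fin 2)))) * (1/2:ℝ)^(t+1) := by
        rw [show (fun y => c (Sum.inl y)) = c ∘ Sum.inl from rfl]; ring
      rw [heq]
      exact key _ (by simpa using hc (Sum.inr (e, (0:Fin 2))))
    have g1 : |FF M (t+1) c (ends ((M+1+t)+1) (e, (1:Fin 4))).1
        - FF M (t+1) c (ends ((M+1+t)+1) (e, (1:Fin 4))).2| ≤ (1+((t:ℝ)+1))*(1/2:ℝ)^(t+1) := by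
      rw [ends_mk1, FF_inl, FF_inr]
      have heq : ((FF M t (c ∘ Sum.inl) (ends (M+1+t) e).1
              + FF M t (c ∘ Sum.inl) (ends (M+1+t) e).2)/2
            + c (Sum.inr (e, (0:Fin 2))) * (1/2:ℝ)^(t+1))
          - FF M t (c ∘ Sum.inl) (ends (M+1+t) e).2
          = (FF M t (fun y => c (Sum.inl y)) (ends (M+1+t) e).1
              - FF M t (fun y => c (Sum.inl y)) (ends (M+1+t) e).2)/2
            + (c (Sum.inr (e, (0:Fin 2)))) * (1/2:ℝ)^(t+1) := by
        rw [show (fun y => c (Sum.inl y)) = c ∘ Sum.inl from rfl]; ring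
      rw [heq]
      exact key _ (hc _)
    have g2 : |FF M (t+1) c (ends ((M+1+t)+1) (e, (2:Fin 4))).1
        - FF M (t+1) c (ends ((M+1+t)+1) (e, (2:Fin 4))).2| ≤ (1+((t:ℝ)+1))*(1/2:ℝ)^(t+1) := by
      rw [ends_mk2, FF_inl, FF_inr]
      have heq : ((FF M t (c ∘ Sum.inl) (ends (M+1+t) e).1
              + FF M t (c ∘ Sum.inl) (ends (M+1+t) e).2)/2
            + c (Sum.inr (e, (1:Fin 2))) * (1/2:ℝ)^(t+1))
          - FF M t (c ∘ Sum.inl) (ends (M+1+t) e).2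
          = (FF M t (fun y => c (Sum.inl y)) (ends (M+1+t) e).1
              - FF M t (fun y => c (Sum.inl y)) (ends (M+1+t) e).2)/2
            + (c (Sum.inr (e, (1:Fin 2)))) * (1/2:ℝ)^(t+1) := by
        rw [show (fun y => c (Sum.inl y)) = c ∘ Sum.inl from rfl]; ring
      rw [heq]
      exact key _ (hc _)
    have g3 : |FF M (t+1) c (ends ((M+1+t)+1) (e, (3:Fin 4))).1
        - FF M (t+1) c (ends ((M+1+t)+1) (e, (3:Fin 4))).2| ≤ (1+((t:ℝ)+1))*(1/2:ℝ)^(t+1) := by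
      rw [ends_mk3, FF_inl, FF_inr]
      have heq : FF M t (c ∘ Sum.inl) (ends (M+1+t) e).1
          - ((FF M t (c ∘ Sum.inl) (ends (M+1+t) e).1
              + FF M t (c ∘ Sum.inl) (ends (M+1+t) e).2)/2
            + c (Sum.inr (e, (1:Fin 2))) * (1/2:ℝ)^(t+1))
          = (FF M t (fun y => c (Sum.inl y)) (ends (M+1+t) e).1
              - FF M t (fun y => c (Sum.inl y)) (ends (M+1+t) e).2)/2
            + (- c (Sum.inr (e, (1:Fin 2)))) * (1/2:ℝ)^(t+1) := by
        rw [show (fun y => c (Sum.inl y)) = c ∘ Sum.inl from rfl]; ring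
      rw [heq]
      exact key _ (by simpa using hc (Sum.inr (e, (1:Fin 2))))
    have : (1+((t+1:ℕ)):ℝ) = 1+((t:ℝ)+1) := by push_cast; ring
    rw [this]
    fin_cases i
    · exact g0
    · exact g1
    · exact g2
    · exact g3

/-- Pairing upper bound against functions with small edge increments. -/
lemma pair_BB_bound (M : ℕ) : ∀ t (f : DV (M+1+t) → ℝ) (Mb : ℝ), 0 ≤ Mb →
    (∀ e : DE (M+1+t), |f (ends (M+1+t) e).1 - f (ends (M+1+t) e).2| ≤ Mb) →
    ∀ y : KK M t, |∑ v, BB M t y v * f v| ≤ 2^t * Mb * ww M t y := by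
  intro t
  induction t with
  | zero =>
    intro f Mb hMb hf w
    rw [pair_BB0 M w f]
    show _ ≤ 2^0 * Mb * 1
    rcases pickE_spec M w with h | h
    · have := hf ((pickE M w, (0:Fin 4)) : DE (M+1))
      rw [ends_mk0] at this
      rw [← h] at this
      simpa using this
    · have := hf ((pickE M w, (1:Fin 4)) : DE (M+1))
      rw [ends_mk1] at this
      rw [← h] at this
      rw [abs_sub_comm] at this
      simpa using this
  | succ t ih =>
    intro f Mb hMb hf
    have hf' : ∀ e : DE ((M+1+t)+1),
        |f (ends ((M+1+t)+1) e).1 - f (ends ((M+1+t)+1) e).2| ≤ Mb := hf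
    have hg : ∀ e : DE (M+1+t),
        |f (Sum.inl (ends (M+1+t) e).1) - f (Sum.inl (ends (M+1+t) e).2)| ≤ 2*Mb := by
      intro e
      have h0 := hf' (e, (0:Fin 4))
      rw [ends_mk0] at h0
      have h1 := hf' (e, (1:Fin 4))
      rw [ends_mk1] at h1
      calc |f (Sum.inl (ends (M+1+t) e).1) - f (Sum.inl (ends (M+1+t) e).2)|
          ≤ |f (Sum.inl (ends (M+1+t) e).1) - f (Sum.inr (e, (0:Fin 2)))|
            + |f (Sum.inr (e, (0:Fin 2))) - f (Sum.inl (ends (M+1+t) e).2)| := by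
            exact abs_sub_le _ _ _
        _ ≤ 2*Mb := by linarith
    rintro (y | x)
    · rw [pair_BB_inl]
      have := ih (fun v => f (Sum.inl v)) (2*Mb) (by linarith) hg y
      show |∑ v, BB M t y v * f (Sum.inl v)| ≤ 2^(t+1) * Mb * ww M t y
      calc |∑ v, BB M t y v * f (Sum.inl v)| ≤ 2^t * (2*Mb) * ww M t y := this
        _ = 2^(t+1) * Mb * ww M t y := by ring
    · rw [pair_BB_inr]
      show _ ≤ 2^(t+1) * Mb * (1/2:ℝ)^t
      rcases x with ⟨e, i⟩
      have key : ∀ i : Fin 2,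
          (|f (Sum.inl (ends (M+1+t) e).1) - f (Sum.inr (e, i))| ≤ Mb) →
          (|f (Sum.inr (e, i)) - f (Sum.inl (ends (M+1+t) e).2)| ≤ Mb) →
          |2 * f (Sum.inr (e, i)) - f (Sum.inl (ends (M+1+t) e).1)
            - f (Sum.inl (ends (M+1+t) e).2)| ≤ 2^(t+1) * Mb * (1/2:ℝ)^t := by
        intro i hA hB
        have h2 : (2:ℝ)^(t+1) * Mb * (1/2:ℝ)^t = 2*Mb := by
          rw [pow_succ]
          have : (2:ℝ)^t * (1/2:ℝ)^t = 1 := by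
            rw [← mul_pow]; norm_num
          nlinarith [this]
        rw [h2]
        have hA' : |f (Sum.inr (e, i)) - f (Sum.inl (ends (M+1+t) e).1)| ≤ Mb := by
          rw [abs_sub_comm]; exact hA
        calc |2 * f (Sum.inr (e, i)) - f (Sum.inl (ends (M+1+t) e).1)
            - f (Sum.inl (ends (M+1+t) e).2)|
            = |(f (Sum.inr (e, i)) - f (Sum.inl (ends (M+1+t) e).1))
              + (f (Sum.inr (e, i)) - f (Sum.inl (ends (M+1+t) e).2))| := by ring_nf
          _ ≤ _ + _ := abs_add_le _ _
          _ ≤ 2*Mb := by linarith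
      match i with
      | (0 : Fin 2) =>
        have h0 := hf' (e, (0:Fin 4)); rw [ends_mk0] at h0
        have h1 := hf' (e, (1:Fin 4)); rw [ends_mk1] at h1
        exact key 0 h0 h1
      | (1 : Fin 2) =>
        have h3 := hf' (e, (3:Fin 4)); rw [ends_mk3] at h3
        have h2' := hf' (e, (2:Fin 4)); rw [ends_mk2] at h2'
        exact key 1 h3 h2'

lemma card_DE : ∀ j, Fintype.card (DE j) = 4^j := by
  intro j
  induction j with
  | zero => exact Fintype.card_unit
  | succ j ih =>
    have : Fintype.card (DE (j+1)) = Fintype.card (DE j × Fin 4) :=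
      Fintype.card_congr (Equiv.refl _)
    rw [this, Fintype.card_prod, ih, Fintype.card_fin]
    ring

lemma card_DV : ∀ j, Fintype.card (DV j) = 2*(1 + ∑ i ∈ Finset.range j, 4^i) := by
  intro j
  induction j with
  | zero => simp [Fintype.card_fin]; rfl
  | succ j ih =>
    have : Fintype.card (DV (j+1)) = Fintype.card (DV j ⊕ DE j × Fin 2) :=
      Fintype.card_congr (Equiv.refl _)
    rw [this, Fintype.card_sum, Fintype.card_prod, ih, card_DE, Fintype.card_fin,
      Finset.sum_range_succ]
    ring

lemma card_KK (M : ℕ) : ∀ t, Fintype.card (KK M t) + 2*4^M = Fintype.card (DV (M+1+t)) := by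
  intro t
  induction t with
  | zero =>
    have h1 : Fintype.card (KK M 0) = Fintype.card (DV M) := Fintype.card_congr (Equiv.refl _)
    have h2 : Fintype.card (DV (M+1)) = Fintype.card (DV M ⊕ DE M × Fin 2) :=
      Fintype.card_congr (Equiv.refl _)
    rw [h1, h2, Fintype.card_sum, Fintype.card_prod, card_DE, Fintype.card_fin]
    ring
  | succ t ih =>
    have h1 : Fintype.card (KK M (t+1)) = Fintype.card (KK M t ⊕ DE (M+1+t) × Fin 2) :=
      Fintype.card_congr (Equiv.refl _)
    have h2 : Fintype.card (DV (M+1+(t+1))) = Fintype.card (DV (M+1+t) ⊕ DE (M+1+t) × Fin 2) :=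
      Fintype.card_congr (Equiv.refl _)
    rw [h1, h2, Fintype.card_sum, Fintype.card_sum]
    omega

lemma DV_nonempty : ∀ j, Nonempty (DV j)
  | 0 => ⟨(0 : Fin 2)⟩
  | j+1 => ⟨Sum.inl (DV_nonempty j).some⟩

lemma one_add_le_two_pow : ∀ q : ℕ, (1+(q:ℝ)) ≤ 2^q := by
  intro q
  induction q with
  | zero => norm_num
  | succ q ih =>
    have h1 : (1:ℝ) ≤ 2^q := one_le_pow₀ (by norm_num)
    rw [pow_succ]
    push_cast
    nlinarith

lemma gap_coeff_le_one (q : ℕ) : (1+(q:ℝ))*(1/2:ℝ)^q ≤ 1 := by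
  have h1 := one_add_le_two_pow q
  have h2 : (0:ℝ) < (1/2:ℝ)^q := by positivity
  have h3 : (1/2:ℝ)^q * 2^q = 1 := by
    rw [← mul_pow]; norm_num
  nlinarith

section LipDV

variable {N : ℕ} [MetricSpace (DV N)]

lemma adj_abs_le (hdist : ∀ x y : DV N, dist x y = ((DG N).dist x y : ℝ))
    (f : DV N → ℝ) (hf : ∀ e : DE N, |f (ends N e).1 - f (ends N e).2| ≤ 1)
    {x y : DV N} (h : (DG N).Adj x y) : |f x - f y| ≤ 1 := by
  obtain ⟨hne, e, he | he⟩ := h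
  · have := hf e
    rw [he] at this
    exact this
  · have := hf e
    rw [he] at this
    rw [abs_sub_comm] at this
    exact this

lemma lip_of_gap (hdist : ∀ x y : DV N, dist x y = ((DG N).dist x y : ℝ))
    (f : DV N → ℝ) (hf : ∀ e : DE N, |f (ends N e).1 - f (ends N e).2| ≤ 1) :
    LipschitzWith 1 f := by
  have hwalk : ∀ (x y : DV N) (p : (DG N).Walk x y), |f x - f y| ≤ (p.length : ℝ) := by
    intro x y p
    induction p with
    | nil => simp
    | @cons a b c h q ih =>
      calc |f a - f c| ≤ |f a - f b| + |f b - f c| := abs_sub_le _ _ _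
        _ ≤ 1 + (q.length : ℝ) := by
            have := adj_abs_le hdist f hf h
            linarith
        _ = ((SimpleGraph.Walk.cons h q).length : ℝ) := by
            rw [SimpleGraph.Walk.length_cons]
            push_cast
            ring
  rw [lipschitzWith_iff_dist_le_mul]
  intro x y
  rcases eq_or_ne x y with rfl | hne
  · simp
  · have hreach : (DG N).Reachable x y := by
      by_contra hr
      have h0 := SimpleGraph.dist_eq_zero_of_not_reachable hr
      have : dist x y = 0 := by rw [hdist, h0]; norm_num
      exact hne (dist_eq_zero.mp this)
    obtain ⟨p, hp⟩ := hreach.exists_walk_length_eq_dist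
    have := hwalk x y p
    rw [hp] at this
    rw [Real.dist_eq, NNReal.coe_one, one_mul, hdist]
    exact this

lemma gap_of_lip (hdist : ∀ x y : DV N, dist x y = ((DG N).dist x y : ℝ))
    (f : DV N → ℝ) (hf : LipschitzWith 1 f) (e : DE N) :
    |f (ends N e).1 - f (ends N e).2| ≤ 1 := by
  have hadj : (DG N).Adj (ends N e).1 (ends N e).2 := ⟨ends_ne N e, e, Or.inl rfl⟩
  have hd : (DG N).dist (ends N e).1 (ends N e).2 ≤ 1 := by
    have := SimpleGraph.dist_le (SimpleGraph.Walk.cons hadj SimpleGraph.Walk.nil)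
    simpa using this
  have := hf.dist_le_mul (ends N e).1 (ends N e).2
  rw [Real.dist_eq, NNReal.coe_one, one_mul, hdist] at this
  calc |f (ends N e).1 - f (ends N e).2| ≤ (((DG N).dist (ends N e).1 (ends N e).2 : ℕ) : ℝ) :=
        this
    _ ≤ 1 := by exact_mod_cast hd

lemma freeNorm_set_nonempty (μ : DV N → ℝ) :
    {r : ℝ | ∃ f : DV N → ℝ, LipschitzWith 1 f ∧ r = ∑ p, μ p * f p}.Nonempty := by
  refine ⟨∑ p, μ p * (0:ℝ), fun _ => (0:ℝ), ?_, by simp⟩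
  exact (LipschitzWith.const 0).weaken (by norm_num)

lemma molecule_bddAbove (μ : DV N → ℝ) (hμ : ∑ p, μ p = 0) :
    BddAbove {r : ℝ | ∃ f : DV N → ℝ, LipschitzWith 1 f ∧ r = ∑ p, μ p * f p} := by
  obtain ⟨p0⟩ := DV_nonempty N
  refine ⟨∑ p, |μ p| * dist p p0, ?_⟩
  rintro r ⟨f, hf, rfl⟩
  have heq : ∑ p, μ p * f p = ∑ p, μ p * (f p - f p0) := by
    simp only [mul_sub, Finset.sum_sub_distrib, ← Finset.sum_mul, hμ]
    ring
  rw [heq]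
  calc ∑ p, μ p * (f p - f p0) ≤ ∑ p, |μ p * (f p - f p0)| :=
        Finset.sum_le_sum (fun p _ => le_abs_self _)
    _ ≤ ∑ p, |μ p| * dist p p0 := by
        refine Finset.sum_le_sum (fun p _ => ?_)
        rw [abs_mul]
        refine mul_le_mul_of_nonneg_left ?_ (abs_nonneg _)
        have := hf.dist_le_mul p p0
        rw [Real.dist_eq, NNReal.coe_one, one_mul] at this
        exact this

lemma freeNorm_ge (μ : DV N → ℝ) (hμ : ∑ p, μ p = 0) (f : DV N → ℝ) (hf : LipschitzWith 1 f) :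
    ∑ p, μ p * f p ≤ freeNorm (DV N) μ :=
  le_csSup (molecule_bddAbove μ hμ) ⟨f, hf, rfl⟩

lemma freeNorm_le (μ : DV N → ℝ) (b : ℝ)
    (hb : ∀ f : DV N → ℝ, LipschitzWith 1 f → ∑ p, μ p * f p ≤ b) :
    freeNorm (DV N) μ ≤ b := by
  refine csSup_le (freeNorm_set_nonempty μ) ?_
  rintro r ⟨f, hf, rfl⟩
  exact hb f hf

end LipDV

noncomputable def sng {α : Type*} [DecidableEq α] (a : α) : α → ℝ := fun b => if b = a then 1 else 0

lemma sng_self {α : Type*} [DecidableEq α] (a : α) : sng a a = 1 := by simp [sng]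

lemma sng_ne {α : Type*} [DecidableEq α] {a b : α} (h : b ≠ a) : sng a b = 0 := by
  simp [sng, h]

noncomputable def Smap (M Q : ℕ) : (KK M Q → ℝ) →ₗ[ℝ] (DV (M+1+Q) → ℝ) where
  toFun c := fun v => ∑ y, c y * BB M Q y v
  map_add' c d := by
    funext v
    simp only [Pi.add_apply, add_mul, Finset.sum_add_distrib]
  map_smul' r c := by
    funext v
    simp only [Pi.smul_apply, smul_eq_mul, RingHom.id_apply, Finset.mul_sum, mul_assoc]

lemma Smap_apply (M Q : ℕ) (c : KK M Q → ℝ) (v : DV (M+1+Q)) :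
    Smap M Q c v = ∑ y, c y * BB M Q y v := rfl

lemma pair_Smap (M Q : ℕ) (c : KK M Q → ℝ) (f : DV (M+1+Q) → ℝ) :
    ∑ v, Smap M Q c v * f v = ∑ y, c y * (∑ v, BB M Q y v * f v) := by
  simp only [Smap_apply, Finset.sum_mul, Finset.mul_sum]
  rw [Finset.sum_comm]
  refine Finset.sum_congr rfl (fun y _ => Finset.sum_congr rfl (fun v _ => by ring))

lemma pair_Smap_FF (M Q : ℕ) (c d : KK M Q → ℝ) :
    ∑ v, Smap M Q c v * FF M Q d v = ∑ y, c y * d y * ww M Q y := by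
  rw [pair_Smap]
  refine Finset.sum_congr rfl (fun y _ => ?_)
  rw [pair_BB_FF]
  ring

lemma sum_sng_w (M Q : ℕ) (c : KK M Q → ℝ) (y : KK M Q) :
    ∑ y', c y' * sng y y' * ww M Q y' = c y * ww M Q y := by
  rw [Finset.sum_eq_single y]
  · rw [sng_self]; ring
  · intro y' _ hne
    rw [sng_ne hne]
    ring
  · intro h
    exact absurd (Finset.mem_univ y) h

lemma Smap_inj (M Q : ℕ) : Function.Injective (Smap M Q) := by
  intro a b hab
  have h0 : Smap M Q (a - b) = 0 := by rw [map_sub, hab, sub_self]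
  have hz : a - b = 0 := by
    funext y
    have h1 : ∑ v, Smap M Q (a-b) v * FF M Q (sng y) v = 0 := by
      rw [h0]; simp
    rw [pair_Smap_FF] at h1
    rw [sum_sng_w] at h1
    have := ww_pos M Q y
    rcases mul_eq_zero.mp h1 with h | h
    · exact h
    · linarith
  have h4 := sub_eq_zero.mp hz
  exact h4

/-- coordinate extraction map. -/
noncomputable def Lmap (M Q : ℕ) : (DV (M+1+Q) → ℝ) →ₗ[ℝ] (KK M Q → ℝ) :=
  LinearMap.pi (fun y =>
    (ww M Q y)⁻¹ • (∑ v, (FF M Q (sng y) v) • LinearMap.proj v))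

lemma Lmap_apply (M Q : ℕ) (μ : DV (M+1+Q) → ℝ) (y : KK M Q) :
    Lmap M Q μ y = (∑ v, μ v * FF M Q (sng y) v) / ww M Q y := by
  simp only [Lmap, LinearMap.pi_apply, LinearMap.smul_apply, LinearMap.coe_sum,
    Finset.sum_apply, LinearMap.proj_apply, smul_eq_mul]
  rw [div_eq_inv_mul]
  congr 1
  refine Finset.sum_congr rfl (fun v _ => by ring)

lemma FF_decomp (M Q : ℕ) (d : KK M Q → ℝ) (v : DV (M+1+Q)) :
    FF M Q d v = ∑ y, d y * FF M Q (sng y) v := by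
  let FFv : (KK M Q → ℝ) →ₗ[ℝ] ℝ :=
    { toFun := fun c => FF M Q c v
      map_add' := fun c d => by
        have := FF_add M Q c d v
        exact this
      map_smul' := fun r c => by
        have := FF_smul M Q r c v
        exact this }
  have hd : d = ∑ y, d y • sng y := by
    funext y'
    simp only [Finset.sum_apply, Pi.smul_apply, smul_eq_mul, sng, mul_ite, mul_one, mul_zero]
    rw [Finset.sum_ite_eq Finset.univ]
    simp
  calc FF M Q d v = FFv d := rfl
    _ = FFv (∑ y, d y • sng y) := by rw [← hd]
    _ = ∑ y, d y * FFv (sng y) := by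
        rw [map_sum]
        refine Finset.sum_congr rfl (fun y _ => ?_)
        rw [map_smul]
        simp
    _ = ∑ y, d y * FF M Q (sng y) v := rfl

lemma Lmap_Smap (M Q : ℕ) (c : KK M Q → ℝ) : Lmap M Q (Smap M Q c) = c := by
  funext y
  rw [Lmap_apply, pair_Smap_FF, sum_sng_w, mul_div_assoc,
    div_self (ne_of_gt (ww_pos M Q y)), mul_one]

lemma mem_molecules {X : Type*} [Fintype X] (μ : X → ℝ) :
    μ ∈ molecules X ↔ ∑ p, μ p = 0 := Iff.rfl

lemma Smap_mem_molecules (M Q : ℕ) (c : KK M Q → ℝ) :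
    Smap M Q c ∈ molecules (DV (M+1+Q)) := by
  rw [mem_molecules]
  have h : ∑ v, Smap M Q c v = ∑ y, c y * (∑ v, BB M Q y v) := by
    simp only [Smap_apply, Finset.mul_sum]
    rw [Finset.sum_comm]
  rw [h]
  simp [sum_BB]

lemma proj_swap (M Q : ℕ) (μ f : DV (M+1+Q) → ℝ) :
    ∑ y, Lmap M Q μ y * (∑ v, BB M Q y v * f v)
      = ∑ v, μ v * FF M Q (fun y => (∑ w, BB M Q y w * f w) / ww M Q y) v := by
  have step1 : ∀ y : KK M Q, Lmap M Q μ y * (∑ v, BB M Q y v * f v)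
      = ∑ v, μ v * (((∑ w, BB M Q y w * f w) / ww M Q y) * FF M Q (sng y) v) := by
    intro y
    rw [Lmap_apply, div_mul_eq_mul_div, Finset.sum_mul, Finset.sum_div]
    exact Finset.sum_congr rfl (fun v _ => by ring)
  calc ∑ y, Lmap M Q μ y * (∑ v, BB M Q y v * f v)
      = ∑ y, ∑ v, μ v * (((∑ w, BB M Q y w * f w) / ww M Q y) * FF M Q (sng y) v) :=
        Finset.sum_congr rfl (fun y _ => step1 y)
    _ = ∑ v, ∑ y, μ v * (((∑ w, BB M Q y w * f w) / ww M Q y) * FF M Q (sng y) v) :=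
        Finset.sum_comm
    _ = ∑ v, μ v * FF M Q (fun y => (∑ w, BB M Q y w * f w) / ww M Q y) v := by
        refine Finset.sum_congr rfl (fun v _ => ?_)
        rw [← Finset.mul_sum, FF_decomp]

lemma FF_scale (M Q : ℕ) (c : KK M Q → ℝ) (r : ℝ) (hr : r ≠ 0) (v : DV (M+1+Q)) :
    FF M Q c v = r * FF M Q (fun y => c y / r) v := by
  rw [← FF_smul]
  congr 1
  funext y
  field_simp


/-- for `1 ≤ m < n`, `F(D_n)` contains a `C`-complemented subspace
`C`-isomorphic to `ℓ₁^k`, where `C = 2^{n-m}` and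
`k = 2(1 + ∑_{i=0}^{n-1} 4^i) - 2·4^{m-1}`. -/
theorem stmt8 (n m : ℕ) (hm : 1 ≤ m) (hmn : m < n) [MetricSpace (DV n)]
    (hdist : ∀ x y : DV n, dist x y = ((DG n).dist x y : ℝ)) :
    ∃ Y : Submodule ℝ (DV n → ℝ), Y ≤ molecules (DV n) ∧
      (∃ T : Y ≃ₗ[ℝ] (Fin (2 * (1 + ∑ i ∈ Finset.range n, 4 ^ i) - 2 * 4 ^ (m - 1)) → ℝ),
        ∀ u : Y, l1norm (T u) ≤ freeNorm (DV n) u ∧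
          freeNorm (DV n) u ≤ (2 ^ (n - m) : ℝ) * l1norm (T u)) ∧
      (∃ P : (DV n → ℝ) →ₗ[ℝ] (DV n → ℝ),
        (∀ m' ∈ molecules (DV n), P m' ∈ Y) ∧ (∀ u ∈ Y, P u = u) ∧
        ∀ m' ∈ molecules (DV n),
          freeNorm (DV n) (P m') ≤ (2 ^ (n - m) : ℝ) * freeNorm (DV n) m') := by
  obtain ⟨M, rfl⟩ : ∃ M, m = M + 1 := ⟨m - 1, by omega⟩
  obtain ⟨Q, rfl⟩ : ∃ Q, n = M + 1 + Q := ⟨n - (M+1), by omega⟩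
  simp only [Nat.add_sub_cancel_left, Nat.add_sub_cancel]
  have hcard : Fintype.card (KK M Q)
      = 2 * (1 + ∑ i ∈ Finset.range (M+1+Q), 4 ^ i) - 2 * 4 ^ M := by
    have h1 := card_KK M Q
    have h2 := card_DV (M+1+Q)
    omega
  have hQpos : (0:ℝ) < 2^Q := by positivity
  have hFFlip : ∀ (s : KK M Q → ℝ), (∀ y, |s y| ≤ 1) → LipschitzWith 1 (FF M Q s) := by
    intro s hs
    apply lip_of_gap hdist
    intro e
    calc |FF M Q s (ends (M+1+Q) e).1 - FF M Q s (ends (M+1+Q) e).2|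
        ≤ (1+(Q:ℝ))*(1/2:ℝ)^Q := gap_FF M Q s hs e
      _ ≤ 1 := gap_coeff_le_one Q
  refine ⟨LinearMap.range (Smap M Q), ?_, ?_, ?_⟩
  · rintro μ ⟨c, rfl⟩
    exact Smap_mem_molecules M Q c
  · -- the linear equivalence T
    let eqv : KK M Q ≃ Fin (2 * (1 + ∑ i ∈ Finset.range (M+1+Q), 4 ^ i) - 2 * 4 ^ M) :=
      Fintype.equivFinOfCardEq hcard
    let Dw : (KK M Q → ℝ) ≃ₗ[ℝ] (KK M Q → ℝ) :=
      { toFun := fun c => fun y => c y * ww M Q y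
        invFun := fun c => fun y => c y / ww M Q y
        map_add' := fun a b => by funext y; simp [add_mul]
        map_smul' := fun r a => by funext y; simp; ring
        left_inv := fun c => by
          funext y
          exact mul_div_cancel_right₀ (c y) (ne_of_gt (ww_pos M Q y))
        right_inv := fun c => by
          funext y
          exact div_mul_cancel₀ (c y) (ne_of_gt (ww_pos M Q y)) }
    let e1 := LinearEquiv.ofInjective (Smap M Q) (Smap_inj M Q)
    refine ⟨(e1.symm.trans Dw).trans (LinearEquiv.funCongrLeft ℝ ℝ eqv.symm), ?_⟩
    intro u
    set c : KK M Q → ℝ := e1.symm u with hc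
    have hu : (u : DV (M+1+Q) → ℝ) = Smap M Q c := by
      have h1 : e1 c = u := by rw [hc]; exact e1.apply_symm_apply u
      have h2 : ((e1 c : LinearMap.range (Smap M Q)) : DV (M+1+Q) → ℝ) = Smap M Q c := by
        simp [e1, LinearEquiv.ofInjective_apply]
      rw [← h1]
      exact h2
    have hTu : ∀ i, ((e1.symm.trans Dw).trans
        (LinearEquiv.funCongrLeft ℝ ℝ eqv.symm)) u i
          = c (eqv.symm i) * ww M Q (eqv.symm i) := fun i => rfl
    have hl1 : l1norm (((e1.symm.trans Dw).trans (LinearEquiv.funCongrLeft ℝ ℝ eqv.symm)) u)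
        = ∑ y, |c y| * ww M Q y := by
      show ∑ i, |((e1.symm.trans Dw).trans (LinearEquiv.funCongrLeft ℝ ℝ eqv.symm)) u i| = _
      calc ∑ i, |((e1.symm.trans Dw).trans (LinearEquiv.funCongrLeft ℝ ℝ eqv.symm)) u i|
          = ∑ i, (fun y => |c y| * ww M Q y) (eqv.symm i) := by
            refine Finset.sum_congr rfl (fun i _ => ?_)
            rw [hTu i, abs_mul, abs_of_pos (ww_pos M Q (eqv.symm i))]
        _ = ∑ y, |c y| * ww M Q y := by
            simpa using Equiv.sum_comp eqv.symm (fun y => |c y| * ww M Q y)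
    constructor
    · -- lower bound
      refine le_trans (le_of_eq hl1) ?_
      set s : KK M Q → ℝ := fun y => if 0 ≤ c y then 1 else -1 with hs_def
      have hs : ∀ y, |s y| ≤ 1 := by
        intro y; rw [hs_def]; dsimp only; split <;> norm_num
      have hcs : ∀ y, c y * s y = |c y| := by
        intro y; rw [hs_def]; dsimp only
        split
        · rw [abs_of_nonneg (by assumption)]; ring
        · rw [abs_of_neg (lt_of_not_ge (by assumption))]; ring
      have hlow : ∑ p, (Smap M Q c) p * FF M Q s p = ∑ y, |c y| * ww M Q y := by
        rw [pair_Smap_FF]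
        exact Finset.sum_congr rfl (fun y _ => by rw [hcs y])
      rw [hu]
      calc ∑ y, |c y| * ww M Q y = ∑ p, (Smap M Q c) p * FF M Q s p := hlow.symm
        _ ≤ freeNorm (DV (M+1+Q)) (Smap M Q c) :=
            freeNorm_ge _ (Smap_mem_molecules M Q c) _ (hFFlip s hs)
    · -- upper bound
      refine le_trans ?_ (le_of_eq (congrArg (fun z => (2:ℝ)^Q * z) hl1).symm)
      rw [hu]
      apply freeNorm_le
      intro f hf
      rw [pair_Smap]
      have hPB : ∀ y, |∑ v, BB M Q y v * f v| ≤ 2^Q * 1 * ww M Q y :=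
        fun y => pair_BB_bound M Q f 1 (by norm_num)
          (fun e => gap_of_lip hdist f hf e) y
      calc ∑ y, c y * (∑ v, BB M Q y v * f v)
          ≤ ∑ y, |c y * (∑ v, BB M Q y v * f v)| :=
            Finset.sum_le_sum (fun y _ => le_abs_self _)
        _ ≤ ∑ y, |c y| * (2^Q * 1 * ww M Q y) := by
            refine Finset.sum_le_sum (fun y _ => ?_)
            rw [abs_mul]
            exact mul_le_mul_of_nonneg_left (hPB y) (abs_nonneg _)
        _ = 2^Q * ∑ y, |c y| * ww M Q y := by
            rw [Finset.mul_sum]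
            exact Finset.sum_congr rfl (fun y _ => by ring)
  · -- the projection
    refine ⟨(Smap M Q).comp (Lmap M Q), ?_, ?_, ?_⟩
    · intro μ _
      exact ⟨Lmap M Q μ, rfl⟩
    · rintro u ⟨c, rfl⟩
      show Smap M Q (Lmap M Q (Smap M Q c)) = Smap M Q c
      rw [Lmap_Smap]
    · intro μ hμ
      apply freeNorm_le
      intro f hf
      show ∑ p, (Smap M Q (Lmap M Q μ)) p * f p ≤ _
      rw [pair_Smap, proj_swap M Q μ f]
      have hPB : ∀ y, |∑ v, BB M Q y v * f v| ≤ 2^Q * 1 * ww M Q y :=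
        fun y => pair_BB_bound M Q f 1 (by norm_num)
          (fun e => gap_of_lip hdist f hf e) y
      have h2 : ∑ v, μ v * FF M Q (fun y => (∑ w, BB M Q y w * f w)/ww M Q y) v
          = 2^Q * ∑ v, μ v * FF M Q
              (fun y => ((∑ w, BB M Q y w * f w)/ww M Q y)/2^Q) v := by
        rw [Finset.mul_sum]
        refine Finset.sum_congr rfl (fun v _ => ?_)
        rw [FF_scale M Q _ (2^Q) (ne_of_gt hQpos) v]
        ring
      rw [h2]
      have hc'' : ∀ y, |((∑ w, BB M Q y w * f w)/ww M Q y)/2^Q| ≤ 1 := by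
        intro y
        rw [abs_div, abs_div, abs_of_pos (ww_pos M Q y), abs_of_pos hQpos,
          div_le_one hQpos, div_le_iff₀ (ww_pos M Q y)]
        have := hPB y
        nlinarith [ww_pos M Q y]
      have hlip'' := hFFlip _ hc''
      have hge := freeNorm_ge μ ((mem_molecules μ).mp hμ) _ hlip''
      exact mul_le_mul_of_nonneg_left hge (le_of_lt hQpos)
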